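/- There is an absolute constant C such that for every ν > 1, every R ≥ 1 and every Schwartz function f : ℝ² → ℂ: ‖f‖_{L^∞(ℝ²)} ≤ C ( R^{1/2} · ‖f‖_{H¹}^{1/2} ‖f‖_{L²}^{1/2} + (ν−1)^{−1/2} · R^{1−ν} · ‖f‖_{H^ν} ). -/

import Mathlib

open MeasureTheory

noncomputable section

abbrev E2 := EuclideanSpace ℝ (Fin 2)

/-- The Sobolev `H^s` norm of a function on `ℝ²`, defined via the Fourier
transform: `‖f‖_{H^s} = (∫ (1+|ξ|²)^s |f̂(ξ)|² dξ)^{1/2}`. -/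
def sobNorm (s : ℝ) (f : E2 → ℂ) : ℝ :=
  (∫ ξ : E2, (1 + ‖ξ‖ ^ 2) ^ s * ‖FourierTransform.fourier f ξ‖ ^ 2) ^ ((1:ℝ) / 2)

namespace BG

open Real Set Metric Module Complex SchwartzMap
open scoped FourierTransform ComplexConjugate RealInnerProductSpace

/-- Cauchy–Schwarz for integrals of nonnegative functions. -/
lemma cs_integral {μ : Measure E2} {u v : E2 → ℝ}
    (hu : AEStronglyMeasurable u μ) (hv : AEStronglyMeasurable v μ)
    (hu0 : 0 ≤ᵐ[μ] u) (hv0 : 0 ≤ᵐ[μ] v)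
    (hu2 : Integrable (fun ξ => u ξ ^ 2) μ) (hv2 : Integrable (fun ξ => v ξ ^ 2) μ) :
    ∫ ξ, u ξ * v ξ ∂μ ≤ (∫ ξ, u ξ ^ 2 ∂μ) ^ ((1:ℝ)/2) * (∫ ξ, v ξ ^ 2 ∂μ) ^ ((1:ℝ)/2) := by
  have h2 : Real.HolderConjugate 2 2 := Real.HolderConjugate.two_two
  have e2 : (ENNReal.ofReal (2:ℝ)) = 2 := by norm_num
  have hmu : MemLp u (ENNReal.ofReal (2:ℝ)) μ := by
    rw [e2]; exact (memLp_two_iff_integrable_sq hu).2 hu2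
  have hmv : MemLp v (ENNReal.ofReal (2:ℝ)) μ := by
    rw [e2]; exact (memLp_two_iff_integrable_sq hv).2 hv2
  have := integral_mul_le_Lp_mul_Lq_of_nonneg h2 hu0 hv0 hmu hmv
  simpa [Real.rpow_two, Real.rpow_natCast] using this


lemma cont_weight (s : ℝ) : Continuous (fun ξ : E2 => (1 + ‖ξ‖ ^ 2) ^ s) := by
  apply Continuous.rpow_const
  · continuity
  · intro x; left; positivity

/-- integrability of `(1+‖ξ‖²)^s ‖g ξ‖²` for Schwartz `g`, `s ≥ 0`. -/
lemma integrable_weight (g : SchwartzMap E2 ℂ) (s : ℝ) (hs : 0 ≤ s) :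
    Integrable (fun ξ : E2 => (1 + ‖ξ‖ ^ 2) ^ s * ‖g ξ‖ ^ 2) := by
  set k : ℕ := ⌈2 * s⌉₊ with hk
  obtain ⟨C0, hC0pos, hC0⟩ := g.decay 0 0
  obtain ⟨C, hCpos, hC⟩ := g.decay (k + 3) 0
  have h2 : ∀ x : E2, (1 + ‖x‖) ^ (k+3) * ‖g x‖ ≤ 2 ^ (k+3) * (C0 + C) := by
    intro x
    have hg0 : ‖g x‖ ≤ C0 := by simpa using hC0 x
    have hgk : ‖x‖ ^ (k + 3) * ‖g x‖ ≤ C := by simpa using hC x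
    have hmax : (max 1 ‖x‖) ^ (k+3) ≤ 1 + ‖x‖ ^ (k+3) := by
      rcases max_cases 1 ‖x‖ with ⟨h, _⟩ | ⟨h, _⟩ <;> rw [h]
      · simp
      · linarith
    have h1 : (1 + ‖x‖) ^ (k+3) ≤ 2 ^ (k+3) * (1 + ‖x‖ ^ (k+3)) := by
      calc (1 + ‖x‖) ^ (k+3) ≤ (2 * max 1 ‖x‖) ^ (k+3) := by
            apply pow_le_pow_left₀ (by positivity)
            rw [two_mul]
            exact add_le_add (le_max_left _ _) (le_max_right _ _)
        _ = 2 ^ (k+3) * (max 1 ‖x‖) ^ (k+3) := mul_pow _ _ _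
        _ ≤ 2 ^ (k+3) * (1 + ‖x‖ ^ (k+3)) := by gcongr
    calc (1 + ‖x‖) ^ (k+3) * ‖g x‖ ≤ (2 ^ (k+3) * (1 + ‖x‖ ^ (k+3))) * ‖g x‖ := by
          gcongr
      _ = 2 ^ (k+3) * (‖g x‖ + ‖x‖ ^ (k+3) * ‖g x‖) := by ring
      _ ≤ 2 ^ (k+3) * (C0 + C) := by gcongr
  have hint : Integrable (fun ξ : E2 => (2 ^ (k+3) * (C0 + C) * C0) * (1 + ‖ξ‖) ^ (-(3:ℝ))) :=
    (integrable_one_add_norm (E := E2) (by norm_num)).const_mul _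
  refine hint.mono' ?_ ?_
  · exact ((cont_weight s).mul ((g.continuous.norm.pow 2))).aestronglyMeasurable
  · filter_upwards with ξ
    have hb1 : (0:ℝ) < 1 + ‖ξ‖ := by positivity
    have hnn : (0:ℝ) ≤ (1 + ‖ξ‖ ^ 2) ^ s * ‖g ξ‖ ^ 2 := by positivity
    rw [Real.norm_of_nonneg hnn]
    have step1 : (1 + ‖ξ‖ ^ 2) ^ s ≤ (1 + ‖ξ‖) ^ k := by
      have h1 : (1 + ‖ξ‖ ^ 2) ≤ (1 + ‖ξ‖) ^ 2 := by nlinarith [norm_nonneg ξ]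
      calc (1 + ‖ξ‖ ^ 2) ^ s ≤ ((1 + ‖ξ‖) ^ 2) ^ s := by
            apply Real.rpow_le_rpow (by positivity) h1 hs
        _ = (1 + ‖ξ‖) ^ (2 * s) := by
            rw [← Real.rpow_natCast (1 + ‖ξ‖) 2, ← Real.rpow_mul hb1.le]; norm_num
        _ ≤ (1 + ‖ξ‖) ^ ((k : ℝ)) := by
            apply Real.rpow_le_rpow_of_exponent_le (by linarith [norm_nonneg ξ])
            exact Nat.le_ceil _
        _ = (1 + ‖ξ‖) ^ k := Real.rpow_natCast _ _
    have key : (1 + ‖ξ‖) ^ k * ‖g ξ‖ ^ 2 * (1 + ‖ξ‖) ^ (3:ℕ) ≤ 2 ^ (k+3) * (C0 + C) * C0 := by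
      have e1 : (1 + ‖ξ‖) ^ k * ‖g ξ‖ ^ 2 * (1 + ‖ξ‖) ^ (3:ℕ)
          = ((1 + ‖ξ‖) ^ (k + 3) * ‖g ξ‖) * ‖g ξ‖ := by ring
      rw [e1]
      have hg0 : ‖g ξ‖ ≤ C0 := by simpa using hC0 ξ
      exact mul_le_mul (h2 ξ) hg0 (norm_nonneg _) (by positivity)
    have e2 : (1 + ‖ξ‖) ^ (-(3:ℝ)) = ((1 + ‖ξ‖) ^ (3:ℕ))⁻¹ := by
      rw [Real.rpow_neg hb1.le, ← Real.rpow_natCast (1 + ‖ξ‖) 3]; norm_num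
    rw [e2, ← div_eq_mul_inv, le_div_iff₀ (by positivity)]
    calc (1 + ‖ξ‖ ^ 2) ^ s * ‖g ξ‖ ^ 2 * (1 + ‖ξ‖) ^ (3:ℕ)
        ≤ (1 + ‖ξ‖) ^ k * ‖g ξ‖ ^ 2 * (1 + ‖ξ‖) ^ (3:ℕ) := by
          have : (0:ℝ) ≤ ‖g ξ‖ ^ 2 := by positivity
          gcongr
      _ ≤ _ := key


lemma integrable_negweight {ν : ℝ} (hν : 1 < ν) :
    Integrable (fun ξ : E2 => (1 + ‖ξ‖ ^ 2) ^ (-ν)) := by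
  have hint : Integrable (fun ξ : E2 => (2:ℝ) ^ ν * (1 + ‖ξ‖) ^ (-(2*ν))) := by
    apply Integrable.const_mul
    apply integrable_one_add_norm (E := E2)
    simp only [finrank_euclideanSpace, Fintype.card_fin]
    push_cast; linarith
  refine hint.mono' (cont_weight (-ν)).aestronglyMeasurable ?_
  filter_upwards with ξ
  have hb1 : (0:ℝ) < 1 + ‖ξ‖ := by positivity
  have hnn : (0:ℝ) ≤ (1 + ‖ξ‖ ^ 2) ^ (-ν) := by positivity
  rw [Real.norm_of_nonneg hnn]
  have h1 : (1 + ‖ξ‖) ^ (2:ℕ) / 2 ≤ 1 + ‖ξ‖ ^ 2 := by nlinarith [norm_nonneg ξ, sq_nonneg (1 - ‖ξ‖)]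
  calc (1 + ‖ξ‖ ^ 2) ^ (-ν) ≤ ((1 + ‖ξ‖) ^ (2:ℕ) / 2) ^ (-ν) := by
        apply Real.rpow_le_rpow_of_nonpos (by positivity) h1 (by linarith)
    _ = (2:ℝ) ^ ν * (1 + ‖ξ‖) ^ (-(2*ν)) := by
        rw [Real.div_rpow (by positivity) (by norm_num),
          ← Real.rpow_natCast (1 + ‖ξ‖) 2, ← Real.rpow_mul hb1.le,
          Real.rpow_neg (by norm_num : (0:ℝ) ≤ 2), div_eq_mul_inv, inv_inv, mul_comm]
        congr 1
        push_cast; ring_nf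

/-- Parseval/Plancherel for Schwartz functions on ℝ². -/
lemma parseval (f : SchwartzMap E2 ℂ) :
    ∫ ξ : E2, ‖𝓕 ⇑f ξ‖ ^ 2 = ∫ x : E2, ‖f x‖ ^ 2 := by
  have hf_int : Integrable (⇑f) := f.integrable
  have hFf : Integrable (𝓕 ⇑f) := by
    exact (SchwartzMap.fourierTransformCLM ℂ f).integrable
  set g : E2 → ℂ := 𝓕 ⇑f with hg
  have hg_int : Integrable (fun ξ : E2 => (starRingEnd ℂ) (g ξ)) := by
    refine hFf.norm.mono' ?_ ?_
    · exact Complex.continuous_conj.comp_aestronglyMeasurable hFf.1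
    · filter_upwards with ξ; simp
  have hflip : (innerₗ E2).flip = innerₗ E2 := by
    apply LinearMap.ext; intro x; apply LinearMap.ext; intro z
    simp only [LinearMap.flip_apply, innerₗ_apply_apply]
    exact real_inner_comm x z
  have key := VectorFourier.integral_fourierIntegral_smul_eq_flip (μ := (volume : Measure E2))
      (ν := (volume : Measure E2)) (L := innerₗ E2)
      Real.continuous_fourierChar continuous_inner hf_int hg_int
  rw [hflip] at key
  have hconj : ∀ (t : ℝ) (z : ℂ), 𝐞 (-t) • (starRingEnd ℂ) z = (starRingEnd ℂ) (𝐞 t • z) := by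
    intro t z
    simp only [Circle.smul_def, smul_eq_mul, map_mul]
    congr 1
    rw [Real.fourierChar_apply, Real.fourierChar_apply, ← Complex.exp_conj]
    congr 1
    rw [map_mul, Complex.conj_I, Complex.conj_ofReal]
    push_cast; ring
  have hFconj : ∀ x : E2, 𝓕 (fun ξ => (starRingEnd ℂ) (g ξ)) x = (starRingEnd ℂ) (f x) := by
    intro x
    have hinv : 𝓕⁻ g x = f x := by
      rw [hg, Continuous.fourierInv_fourier_eq f.continuous hf_int hFf]
    calc 𝓕 (fun ξ => (starRingEnd ℂ) (g ξ)) x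
        = ∫ v : E2, 𝐞 (-(inner ℝ v x : ℝ)) • (starRingEnd ℂ) (g v) := Real.fourier_eq _ _
      _ = ∫ v : E2, (starRingEnd ℂ) (𝐞 ((inner ℝ v x : ℝ)) • g v) := by
          congr 1; funext v; exact hconj _ _
      _ = (starRingEnd ℂ) (∫ v : E2, 𝐞 ((inner ℝ v x : ℝ)) • g v) := integral_conj
      _ = (starRingEnd ℂ) (𝓕⁻ g x) := by rw [Real.fourierInv_eq]
      _ = (starRingEnd ℂ) (f x) := by rw [hinv]
  -- key : ∫ ξ, 𝓕 f ξ • conj (g ξ) = ∫ x, f x • 𝓕(conj g) x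
  have lhs : ∫ ξ : E2, g ξ * (starRingEnd ℂ) (g ξ) = ∫ x : E2, f x * (starRingEnd ℂ) (f x) := by
    have h1 : ∀ ξ : E2, (VectorFourier.fourierIntegral 𝐞 volume (innerₗ E2) (⇑f) ξ) = g ξ :=
      fun ξ => rfl
    have h2 : ∀ x : E2, (VectorFourier.fourierIntegral 𝐞 volume (innerₗ E2)
        (fun ξ => (starRingEnd ℂ) (g ξ)) x) = (starRingEnd ℂ) (f x) := fun x => hFconj x
    have e2 : (fun x : E2 => f x • (VectorFourier.fourierIntegral 𝐞 volume (innerₗ E2)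
        (fun ξ => (starRingEnd ℂ) (g ξ)) x)) = fun x => f x * (starRingEnd ℂ) (f x) := by
      funext x; rw [h2 x, smul_eq_mul]
    calc ∫ ξ : E2, g ξ * (starRingEnd ℂ) (g ξ)
        = ∫ ξ : E2, (VectorFourier.fourierIntegral 𝐞 volume (innerₗ E2) (⇑f) ξ)
            • (starRingEnd ℂ) (g ξ) := rfl
      _ = ∫ x : E2, f x • (VectorFourier.fourierIntegral 𝐞 volume (innerₗ E2)
            (fun ξ => (starRingEnd ℂ) (g ξ)) x) := key
      _ = ∫ x : E2, f x * (starRingEnd ℂ) (f x) := by rw [e2]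
  have conv : ∀ z : ℂ, z * (starRingEnd ℂ) z = ((‖z‖ ^ 2 : ℝ) : ℂ) := by
    intro z; rw [Complex.mul_conj']; norm_cast
  simp_rw [conv] at lhs
  have lhs2 : ∫ ξ : E2, (RCLike.ofReal (‖g ξ‖^2) : ℂ) = ∫ x : E2, (RCLike.ofReal (‖f x‖^2) : ℂ) :=
    lhs
  rw [integral_ofReal, integral_ofReal] at lhs2
  exact_mod_cast lhs2


def Vb : ℝ := (volume (ball (0:E2) 1)).toReal

lemma Vb_nonneg : 0 ≤ Vb := ENNReal.toReal_nonneg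

lemma polar (F : ℝ → ℝ) :
    ∫ ξ : E2, F ‖ξ‖ = 2 * Vb * ∫ y in Ioi (0:ℝ), y * F y := by
  have h := MeasureTheory.integral_fun_norm_addHaar (volume : Measure E2) F
  have hd : finrank ℝ E2 = 2 := by simp
  rw [h, hd]
  norm_num [smul_eq_mul]
  unfold Vb
  rw [measureReal_def]
  ring

lemma lowWeight {R : ℝ} (hR : 1 ≤ R) :
    ∫ ξ in closedBall (0:E2) R, (1 + ‖ξ‖ ^ 2) ^ (-(1:ℝ)/2) ≤ 2 * Vb * R := by
  have hR0 : (0:ℝ) < R := by linarith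
  set F : ℝ → ℝ := fun r => if r ≤ R then (1 + r ^ 2) ^ (-(1:ℝ)/2) else 0 with hF
  have h1 : ∫ ξ in closedBall (0:E2) R, (1 + ‖ξ‖ ^ 2) ^ (-(1:ℝ)/2) = ∫ ξ : E2, F ‖ξ‖ := by
    rw [← integral_indicator (measurableSet_closedBall)]
    congr 1
    funext ξ
    by_cases h : ‖ξ‖ ≤ R
    · rw [indicator_of_mem (by simpa [mem_closedBall_zero_iff] using h)]
      simp [hF, h]
    · rw [indicator_of_notMem (by simpa [mem_closedBall_zero_iff] using h)]
      simp [hF, h]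
  rw [h1, polar]
  have h2 : ∫ y in Ioi (0:ℝ), y * F y ≤ R := by
    have hle : ∫ y in Ioi (0:ℝ), y * F y
        ≤ ∫ y in Ioi (0:ℝ), indicator (Ioc 0 R) (fun _ => (1:ℝ)) y := by
      apply integral_mono_of_nonneg
      · filter_upwards [ae_restrict_mem measurableSet_Ioi] with y hy
        have hy0 : (0:ℝ) < y := hy
        simp only [hF]
        by_cases h : y ≤ R
        · simp only [if_pos h]; positivity
        · simp [h]
      · apply Integrable.restrict
        rw [integrable_indicator_iff measurableSet_Ioc]
        exact integrableOn_const measure_Ioc_lt_top.ne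
      · filter_upwards [ae_restrict_mem measurableSet_Ioi] with y hy
        have hy0 : (0:ℝ) < y := hy
        simp only [hF]
        by_cases h : y ≤ R
        · rw [if_pos h, indicator_of_mem (mem_Ioc.2 ⟨hy, h⟩)]
          have hs : (1 + y ^ 2) ^ (-(1:ℝ)/2) = (Real.sqrt (1 + y ^ 2))⁻¹ := by
            rw [Real.sqrt_eq_rpow, ← Real.rpow_neg (by positivity)]
            norm_num
          rw [hs, ← div_eq_mul_inv, div_le_one (by positivity)]
          calc y = Real.sqrt (y ^ 2) := by rw [Real.sqrt_sq hy0.le]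
            _ ≤ Real.sqrt (1 + y ^ 2) := Real.sqrt_le_sqrt (by linarith)
        · rw [if_neg h, mul_zero]
          exact indicator_nonneg (fun _ _ => by norm_num) y
    have heq : ∫ y in Ioi (0:ℝ), indicator (Ioc 0 R) (fun _ => (1:ℝ)) y = R := by
      rw [integral_indicator measurableSet_Ioc, Measure.restrict_restrict measurableSet_Ioc,
        inter_eq_left.2 Ioc_subset_Ioi_self, setIntegral_const, Real.volume_real_Ioc_of_le hR0.le]
      simp [ENNReal.toReal_ofReal hR0.le]
    linarith
  exact mul_le_mul_of_nonneg_left h2 (by have := Vb_nonneg; linarith)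

lemma highWeight {ν R : ℝ} (hν : 1 < ν) (hR : 1 ≤ R) :
    ∫ ξ in (closedBall (0:E2) R)ᶜ, (1 + ‖ξ‖ ^ 2) ^ (-ν) ≤ Vb * (ν - 1)⁻¹ * R ^ (2 - 2*ν) := by
  have hR0 : (0:ℝ) < R := by linarith
  set G : ℝ → ℝ := fun r => if R < r then (1 + r ^ 2) ^ (-ν) else 0 with hG
  have h1 : ∫ ξ in (closedBall (0:E2) R)ᶜ, (1 + ‖ξ‖ ^ 2) ^ (-ν) = ∫ ξ : E2, G ‖ξ‖ := by
    rw [← integral_indicator (measurableSet_closedBall.compl)]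
    congr 1
    funext ξ
    by_cases h : R < ‖ξ‖
    · rw [indicator_of_mem (by simp [mem_closedBall_zero_iff, not_le.2 h])]
      simp [hG, h]
    · rw [indicator_of_notMem (by simp [mem_closedBall_zero_iff, not_lt.1 h])]
      simp [hG, h]
  rw [h1, polar]
  have h2 : ∫ y in Ioi (0:ℝ), y * G y ≤ R ^ (2 - 2*ν) / (2*ν - 2) := by
    have hint : IntegrableOn (fun y : ℝ => y ^ (1 - 2*ν)) (Ioi R) :=
      integrableOn_Ioi_rpow_of_lt (by linarith) hR0
    have hle : ∫ y in Ioi (0:ℝ), y * G y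
        ≤ ∫ y in Ioi (0:ℝ), indicator (Ioi R) (fun y : ℝ => y ^ (1 - 2*ν)) y := by
      apply integral_mono_of_nonneg
      · filter_upwards [ae_restrict_mem measurableSet_Ioi] with y hy
        have hy0 : (0:ℝ) < y := hy
        simp only [hG]
        by_cases h : R < y
        · simp only [if_pos h]; positivity
        · simp [h]
      · apply Integrable.restrict
        rw [integrable_indicator_iff measurableSet_Ioi]
        exact hint
      · filter_upwards [ae_restrict_mem measurableSet_Ioi] with y hy
        simp only [hG]
        by_cases h : R < y
        · rw [if_pos h, indicator_of_mem (mem_Ioi.2 h)]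
          have hy0 : (0:ℝ) < y := lt_trans hR0 h
          calc y * (1 + y ^ 2) ^ (-ν) ≤ y * (y ^ (2:ℕ)) ^ (-ν) := by
                have := Real.rpow_le_rpow_of_nonpos (x := y ^ 2) (by positivity)
                  (by linarith : y ^ 2 ≤ 1 + y ^ 2) (by linarith : -ν ≤ 0)
                exact mul_le_mul_of_nonneg_left this hy0.le
            _ = y ^ (1:ℝ) * y ^ (((2:ℕ):ℝ) * (-ν)) := by
                rw [Real.rpow_one, ← Real.rpow_natCast y 2, ← Real.rpow_mul hy0.le]
            _ = y ^ ((1:ℝ) + ((2:ℕ):ℝ) * (-ν)) := (Real.rpow_add hy0 _ _).symm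
            _ = y ^ (1 - 2*ν) := by
                rw [show (1:ℝ) + ((2:ℕ):ℝ) * (-ν) = 1 - 2*ν by push_cast; ring]
        · rw [if_neg h, mul_zero]
          exact indicator_nonneg
            (fun z hz => Real.rpow_nonneg (le_trans hR0.le (le_of_lt hz)) _) y
    have heq : ∫ y in Ioi (0:ℝ), indicator (Ioi R) (fun y : ℝ => y ^ (1 - 2*ν)) y
        = R ^ (2 - 2*ν) / (2*ν - 2) := by
      rw [integral_indicator measurableSet_Ioi, Measure.restrict_restrict measurableSet_Ioi,
        inter_eq_left.2 (Ioi_subset_Ioi hR0.le), integral_Ioi_rpow_of_lt (by linarith) hR0]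
      rw [show (1 - 2*ν) + 1 = 2 - 2*ν by ring, neg_div, ← div_neg]
      congr 1
      ring
    linarith
  have h4 : (2:ℝ) * (2*ν - 2)⁻¹ = (ν - 1)⁻¹ := by
    rw [show (2*ν - 2 : ℝ) = 2*(ν-1) by ring, mul_inv, ← mul_assoc,
      mul_inv_cancel₀ two_ne_zero, one_mul]
  have h3 : 2 * Vb * (R ^ (2 - 2*ν) / (2*ν - 2)) = Vb * (ν - 1)⁻¹ * R ^ (2 - 2*ν) := by
    rw [div_eq_mul_inv, ← h4]; ring
  calc 2 * Vb * ∫ y in Ioi (0:ℝ), y * G y ≤ 2 * Vb * (R ^ (2 - 2*ν) / (2*ν - 2)) :=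
        mul_le_mul_of_nonneg_left h2 (by have := Vb_nonneg; linarith)
    _ = _ := h3


lemma norm_le_integral (f : SchwartzMap E2 ℂ) (y : E2) :
    ‖f y‖ ≤ ∫ ξ : E2, ‖𝓕 ⇑f ξ‖ := by
  have hFf : Integrable (𝓕 ⇑f) := by
    exact (SchwartzMap.fourierTransformCLM ℂ f).integrable
  have hinv : 𝓕⁻ (𝓕 ⇑f) = ⇑f := Continuous.fourierInv_fourier_eq f.continuous f.integrable hFf
  calc ‖f y‖ = ‖𝓕⁻ (𝓕 ⇑f) y‖ := by rw [hinv]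
    _ = ‖∫ v : E2, 𝐞 ((inner ℝ v y : ℝ)) • (𝓕 ⇑f) v‖ := by rw [Real.fourierInv_eq]
    _ ≤ ∫ v : E2, ‖𝐞 ((inner ℝ v y : ℝ)) • (𝓕 ⇑f) v‖ := norm_integral_le_integral_norm _
    _ = ∫ v : E2, ‖(𝓕 ⇑f) v‖ := by
        congr 1; funext v
        simp [Circle.smul_def, Circle.norm_coe]
    _ ≤ ∫ ξ : E2, ‖𝓕 ⇑f ξ‖ := le_rfl



set_option maxHeartbeats 1000000 in
theorem main :
    ∃ C : ℝ, 0 < C ∧ ∀ (ν R : ℝ), 1 < ν → 1 ≤ R →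
      ∀ (f : SchwartzMap E2 ℂ) (y : E2),
        ‖f y‖ ≤ C * (R ^ ((1:ℝ) / 2) * (sobNorm 1 ⇑f) ^ ((1:ℝ) / 2) *
            ((∫ x : E2, ‖f x‖ ^ 2) ^ ((1:ℝ) / 2)) ^ ((1:ℝ) / 2)
          + (ν - 1) ^ (-(1:ℝ) / 2) * R ^ (1 - ν) * sobNorm ν ⇑f) := by
  have ha0 : 0 ≤ (2 * Vb) ^ ((1:ℝ)/2) := Real.rpow_nonneg (by have := Vb_nonneg; linarith) _
  have hb0 : 0 ≤ Vb ^ ((1:ℝ)/2) := Real.rpow_nonneg Vb_nonneg _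
  refine ⟨(2 * Vb) ^ ((1:ℝ)/2) + Vb ^ ((1:ℝ)/2) + 1, by linarith, ?_⟩
  intro ν R hν hR f y
  have hR0 : (0:ℝ) < R := by linarith
  set gS : SchwartzMap E2 ℂ := SchwartzMap.fourierTransformCLM ℂ f with hgSdef
  have hgSeq : ⇑gS = 𝓕 ⇑f := rfl
  have hbpos : ∀ ξ : E2, (0:ℝ) < 1 + ‖ξ‖ ^ 2 := fun ξ => by positivity
  -- integrability of the various weighted squares
  have hw_half : Integrable (fun ξ : E2 => (1 + ‖ξ‖ ^ 2) ^ ((1:ℝ)/2) * ‖gS ξ‖ ^ 2) :=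
    integrable_weight gS _ (by norm_num)
  have hw_one : Integrable (fun ξ : E2 => (1 + ‖ξ‖ ^ 2) ^ (1:ℝ) * ‖gS ξ‖ ^ 2) :=
    integrable_weight gS _ zero_le_one
  have hw_nu : Integrable (fun ξ : E2 => (1 + ‖ξ‖ ^ 2) ^ ν * ‖gS ξ‖ ^ 2) :=
    integrable_weight gS _ (by linarith)
  have hw_zero : Integrable (fun ξ : E2 => ‖gS ξ‖ ^ 2) := by
    have h := integrable_weight gS 0 le_rfl
    simpa using h
  -- nonnegativity of the main integrals
  have hA1nn : 0 ≤ ∫ ξ : E2, (1 + ‖ξ‖ ^ 2) ^ (1:ℝ) * ‖gS ξ‖ ^ 2 :=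
    integral_nonneg fun ξ => by positivity
  have hAνnn : 0 ≤ ∫ ξ : E2, (1 + ‖ξ‖ ^ 2) ^ ν * ‖gS ξ‖ ^ 2 :=
    integral_nonneg fun ξ => by positivity
  have hBnn : 0 ≤ ∫ x : E2, ‖f x‖ ^ 2 := integral_nonneg fun x => by positivity
  -- Parseval
  have hpars : (∫ ξ : E2, ‖gS ξ‖ ^ 2) = ∫ x : E2, ‖f x‖ ^ 2 := by
    rw [hgSeq]; exact parseval f
  -- the Sobolev norms, in terms of gS
  have hsob1 : sobNorm 1 ⇑f
      = (∫ ξ : E2, (1 + ‖ξ‖ ^ 2) ^ (1:ℝ) * ‖gS ξ‖ ^ 2) ^ ((1:ℝ)/2) := by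
    unfold sobNorm; rw [hgSeq]
  have hsobν : sobNorm ν ⇑f
      = (∫ ξ : E2, (1 + ‖ξ‖ ^ 2) ^ ν * ‖gS ξ‖ ^ 2) ^ ((1:ℝ)/2) := by
    unfold sobNorm; rw [hgSeq]
  -- starting point : Fourier inversion
  have hstart : ‖f y‖ ≤ ∫ ξ : E2, ‖gS ξ‖ := by
    rw [hgSeq]; exact norm_le_integral f y
  have hsplit : (∫ ξ : E2, ‖gS ξ‖)
      = (∫ ξ in closedBall (0:E2) R, ‖gS ξ‖) + ∫ ξ in (closedBall (0:E2) R)ᶜ, ‖gS ξ‖ :=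
    (integral_add_compl measurableSet_closedBall gS.integrable.norm).symm
  ---- LOW FREQUENCIES
  have e2 : ∀ ξ : E2, ((1 + ‖ξ‖ ^ 2) ^ (-(1:ℝ)/4)) ^ 2 = (1 + ‖ξ‖ ^ 2) ^ (-(1:ℝ)/2) := by
    intro ξ; rw [sq, ← Real.rpow_add (hbpos ξ)]; norm_num
  have e3 : ∀ ξ : E2, ((1 + ‖ξ‖ ^ 2) ^ ((1:ℝ)/4) * ‖gS ξ‖) ^ 2
      = (1 + ‖ξ‖ ^ 2) ^ ((1:ℝ)/2) * ‖gS ξ‖ ^ 2 := by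
    intro ξ
    rw [mul_pow, sq ((1 + ‖ξ‖ ^ 2) ^ ((1:ℝ)/4)), ← Real.rpow_add (hbpos ξ)]; norm_num
  have hlowCS : (∫ ξ in closedBall (0:E2) R, ‖gS ξ‖)
      ≤ (∫ ξ in closedBall (0:E2) R, (1 + ‖ξ‖ ^ 2) ^ (-(1:ℝ)/2)) ^ ((1:ℝ)/2)
        * (∫ ξ in closedBall (0:E2) R, (1 + ‖ξ‖ ^ 2) ^ ((1:ℝ)/2) * ‖gS ξ‖ ^ 2) ^ ((1:ℝ)/2) := by
    have int_u2 : Integrable (fun ξ : E2 => ((1 + ‖ξ‖ ^ 2) ^ (-(1:ℝ)/4)) ^ 2)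
        (volume.restrict (closedBall (0:E2) R)) := by
      have h0 : IntegrableOn (fun ξ : E2 => (1 + ‖ξ‖ ^ 2) ^ (-(1:ℝ)/2)) (closedBall (0:E2) R) :=
        (cont_weight _).continuousOn.integrableOn_compact (isCompact_closedBall _ _)
      exact h0.congr (ae_of_all _ fun ξ => (e2 ξ).symm)
    have int_v2 : Integrable (fun ξ : E2 => ((1 + ‖ξ‖ ^ 2) ^ ((1:ℝ)/4) * ‖gS ξ‖) ^ 2)
        (volume.restrict (closedBall (0:E2) R)) :=
      hw_half.restrict.congr (ae_of_all _ fun ξ => (e3 ξ).symm)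
    have hcs := cs_integral (μ := volume.restrict (closedBall (0:E2) R))
      (u := fun ξ => (1 + ‖ξ‖ ^ 2) ^ (-(1:ℝ)/4))
      (v := fun ξ => (1 + ‖ξ‖ ^ 2) ^ ((1:ℝ)/4) * ‖gS ξ‖)
      ((cont_weight _).aestronglyMeasurable.restrict)
      (((cont_weight _).mul gS.continuous.norm).aestronglyMeasurable.restrict)
      (Filter.Eventually.of_forall fun ξ => by positivity)
      (Filter.Eventually.of_forall fun ξ => by positivity)
      int_u2 int_v2
    simp only [e2, e3] at hcs
    have e1 : (∫ ξ in closedBall (0:E2) R, ‖gS ξ‖)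
        = ∫ ξ in closedBall (0:E2) R,
            ((1 + ‖ξ‖ ^ 2) ^ (-(1:ℝ)/4)) * ((1 + ‖ξ‖ ^ 2) ^ ((1:ℝ)/4) * ‖gS ξ‖) := by
      apply integral_congr_ae
      filter_upwards with ξ
      rw [← mul_assoc, ← Real.rpow_add (hbpos ξ)]
      norm_num
    rw [e1]
    exact hcs
  have hmidCS : (∫ ξ : E2, (1 + ‖ξ‖ ^ 2) ^ ((1:ℝ)/2) * ‖gS ξ‖ ^ 2)
      ≤ (∫ ξ : E2, (1 + ‖ξ‖ ^ 2) ^ (1:ℝ) * ‖gS ξ‖ ^ 2) ^ ((1:ℝ)/2)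
        * (∫ x : E2, ‖f x‖ ^ 2) ^ ((1:ℝ)/2) := by
    have e4 : ∀ ξ : E2, ((1 + ‖ξ‖ ^ 2) ^ ((1:ℝ)/2) * ‖gS ξ‖) ^ 2
        = (1 + ‖ξ‖ ^ 2) ^ (1:ℝ) * ‖gS ξ‖ ^ 2 := by
      intro ξ
      rw [mul_pow, sq ((1 + ‖ξ‖ ^ 2) ^ ((1:ℝ)/2)), ← Real.rpow_add (hbpos ξ)]; norm_num
    have int_u2 : Integrable (fun ξ : E2 => ((1 + ‖ξ‖ ^ 2) ^ ((1:ℝ)/2) * ‖gS ξ‖) ^ 2) :=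
      hw_one.congr (ae_of_all _ fun ξ => (e4 ξ).symm)
    have hcs := cs_integral (μ := (volume : Measure E2))
      (u := fun ξ => (1 + ‖ξ‖ ^ 2) ^ ((1:ℝ)/2) * ‖gS ξ‖) (v := fun ξ => ‖gS ξ‖)
      (((cont_weight _).mul gS.continuous.norm).aestronglyMeasurable)
      (gS.continuous.norm.aestronglyMeasurable)
      (Filter.Eventually.of_forall fun ξ => by positivity)
      (Filter.Eventually.of_forall fun ξ => by positivity)
      int_u2 hw_zero
    simp only [e4] at hcs
    have e5 : (∫ ξ : E2, (1 + ‖ξ‖ ^ 2) ^ ((1:ℝ)/2) * ‖gS ξ‖ ^ 2)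
        = ∫ ξ : E2, ((1 + ‖ξ‖ ^ 2) ^ ((1:ℝ)/2) * ‖gS ξ‖) * ‖gS ξ‖ := by
      apply integral_congr_ae
      filter_upwards with ξ
      rw [mul_assoc, ← sq]
    rw [e5, ← hpars]
    exact hcs
  ---- HIGH FREQUENCIES
  have e6 : ∀ ξ : E2, ((1 + ‖ξ‖ ^ 2) ^ (-ν/2)) ^ 2 = (1 + ‖ξ‖ ^ 2) ^ (-ν) := by
    intro ξ
    rw [sq, ← Real.rpow_add (hbpos ξ)]
    congr 1; ring
  have e7 : ∀ ξ : E2, ((1 + ‖ξ‖ ^ 2) ^ (ν/2) * ‖gS ξ‖) ^ 2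
      = (1 + ‖ξ‖ ^ 2) ^ ν * ‖gS ξ‖ ^ 2 := by
    intro ξ
    rw [mul_pow, sq ((1 + ‖ξ‖ ^ 2) ^ (ν/2)), ← Real.rpow_add (hbpos ξ)]
    congr 2; ring
  have hhighCS : (∫ ξ in (closedBall (0:E2) R)ᶜ, ‖gS ξ‖)
      ≤ (∫ ξ in (closedBall (0:E2) R)ᶜ, (1 + ‖ξ‖ ^ 2) ^ (-ν)) ^ ((1:ℝ)/2)
        * (∫ ξ in (closedBall (0:E2) R)ᶜ, (1 + ‖ξ‖ ^ 2) ^ ν * ‖gS ξ‖ ^ 2) ^ ((1:ℝ)/2) := by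
    have int_u2 : Integrable (fun ξ : E2 => ((1 + ‖ξ‖ ^ 2) ^ (-ν/2)) ^ 2)
        (volume.restrict (closedBall (0:E2) R)ᶜ) :=
      (integrable_negweight hν).restrict.congr (ae_of_all _ fun ξ => (e6 ξ).symm)
    have int_v2 : Integrable (fun ξ : E2 => ((1 + ‖ξ‖ ^ 2) ^ (ν/2) * ‖gS ξ‖) ^ 2)
        (volume.restrict (closedBall (0:E2) R)ᶜ) :=
      hw_nu.restrict.congr (ae_of_all _ fun ξ => (e7 ξ).symm)
    have hcs := cs_integral (μ := volume.restrict (closedBall (0:E2) R)ᶜ)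
      (u := fun ξ => (1 + ‖ξ‖ ^ 2) ^ (-ν/2))
      (v := fun ξ => (1 + ‖ξ‖ ^ 2) ^ (ν/2) * ‖gS ξ‖)
      ((cont_weight _).aestronglyMeasurable.restrict)
      (((cont_weight _).mul gS.continuous.norm).aestronglyMeasurable.restrict)
      (Filter.Eventually.of_forall fun ξ => by positivity)
      (Filter.Eventually.of_forall fun ξ => by positivity)
      int_u2 int_v2
    simp only [e6, e7] at hcs
    have e8 : (∫ ξ in (closedBall (0:E2) R)ᶜ, ‖gS ξ‖)
        = ∫ ξ in (closedBall (0:E2) R)ᶜ,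
            ((1 + ‖ξ‖ ^ 2) ^ (-ν/2)) * ((1 + ‖ξ‖ ^ 2) ^ (ν/2) * ‖gS ξ‖) := by
      apply integral_congr_ae
      filter_upwards with ξ
      rw [← mul_assoc, ← Real.rpow_add (hbpos ξ),
        show -ν/2 + ν/2 = (0:ℝ) by ring, Real.rpow_zero, one_mul]
    rw [e8]
    exact hcs
  ---- numeric bounds for the weight integrals
  have hXlnn : 0 ≤ ∫ ξ in closedBall (0:E2) R, (1 + ‖ξ‖ ^ 2) ^ (-(1:ℝ)/2) :=
    integral_nonneg fun ξ => by positivity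
  have hXmnn : 0 ≤ ∫ ξ in closedBall (0:E2) R, (1 + ‖ξ‖ ^ 2) ^ ((1:ℝ)/2) * ‖gS ξ‖ ^ 2 :=
    integral_nonneg fun ξ => by positivity
  have hXhnn : 0 ≤ ∫ ξ in (closedBall (0:E2) R)ᶜ, (1 + ‖ξ‖ ^ 2) ^ (-ν) :=
    integral_nonneg fun ξ => by positivity
  have hXh2nn : 0 ≤ ∫ ξ in (closedBall (0:E2) R)ᶜ, (1 + ‖ξ‖ ^ 2) ^ ν * ‖gS ξ‖ ^ 2 :=
    integral_nonneg fun ξ => by positivity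
  have hmid2 : (∫ ξ in closedBall (0:E2) R, (1 + ‖ξ‖ ^ 2) ^ ((1:ℝ)/2) * ‖gS ξ‖ ^ 2)
      ≤ (∫ ξ : E2, (1 + ‖ξ‖ ^ 2) ^ (1:ℝ) * ‖gS ξ‖ ^ 2) ^ ((1:ℝ)/2)
        * (∫ x : E2, ‖f x‖ ^ 2) ^ ((1:ℝ)/2) := by
    refine le_trans ?_ hmidCS
    exact setIntegral_le_integral hw_half (Filter.Eventually.of_forall fun ξ => by positivity)
  have hhigh2 : (∫ ξ in (closedBall (0:E2) R)ᶜ, (1 + ‖ξ‖ ^ 2) ^ ν * ‖gS ξ‖ ^ 2)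
      ≤ ∫ ξ : E2, (1 + ‖ξ‖ ^ 2) ^ ν * ‖gS ξ‖ ^ 2 :=
    setIntegral_le_integral hw_nu (Filter.Eventually.of_forall fun ξ => by positivity)
  ---- putting the low part together
  have hlow : (∫ ξ in closedBall (0:E2) R, ‖gS ξ‖)
      ≤ (2 * Vb) ^ ((1:ℝ)/2) * (R ^ ((1:ℝ)/2)
          * ((∫ ξ : E2, (1 + ‖ξ‖ ^ 2) ^ (1:ℝ) * ‖gS ξ‖ ^ 2) ^ ((1:ℝ)/2)) ^ ((1:ℝ)/2)
          * ((∫ x : E2, ‖f x‖ ^ 2) ^ ((1:ℝ)/2)) ^ ((1:ℝ)/2)) := by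
    have s1 : ((∫ ξ in closedBall (0:E2) R, (1 + ‖ξ‖ ^ 2) ^ (-(1:ℝ)/2))) ^ ((1:ℝ)/2)
        ≤ (2 * Vb * R) ^ ((1:ℝ)/2) :=
      Real.rpow_le_rpow hXlnn (lowWeight hR) (by norm_num)
    have s2 : ((∫ ξ in closedBall (0:E2) R, (1 + ‖ξ‖ ^ 2) ^ ((1:ℝ)/2) * ‖gS ξ‖ ^ 2)) ^ ((1:ℝ)/2)
        ≤ ((∫ ξ : E2, (1 + ‖ξ‖ ^ 2) ^ (1:ℝ) * ‖gS ξ‖ ^ 2) ^ ((1:ℝ)/2)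
            * (∫ x : E2, ‖f x‖ ^ 2) ^ ((1:ℝ)/2)) ^ ((1:ℝ)/2) :=
      Real.rpow_le_rpow hXmnn hmid2 (by norm_num)
    have comb := mul_le_mul s1 s2 (Real.rpow_nonneg hXmnn _)
      (Real.rpow_nonneg (mul_nonneg (mul_nonneg (by norm_num) Vb_nonneg) hR0.le) _)
    refine le_trans hlowCS (le_trans comb (le_of_eq ?_))
    rw [Real.mul_rpow (by have := Vb_nonneg; linarith) hR0.le,
      Real.mul_rpow (Real.rpow_nonneg hA1nn _) (Real.rpow_nonneg hBnn _)]
    ring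
  ---- putting the high part together
  have hhigh : (∫ ξ in (closedBall (0:E2) R)ᶜ, ‖gS ξ‖)
      ≤ Vb ^ ((1:ℝ)/2) * ((ν - 1) ^ (-(1:ℝ)/2) * R ^ (1 - ν)
          * (∫ ξ : E2, (1 + ‖ξ‖ ^ 2) ^ ν * ‖gS ξ‖ ^ 2) ^ ((1:ℝ)/2)) := by
    have hν1 : (0:ℝ) ≤ ν - 1 := by linarith
    have s1 : ((∫ ξ in (closedBall (0:E2) R)ᶜ, (1 + ‖ξ‖ ^ 2) ^ (-ν))) ^ ((1:ℝ)/2)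
        ≤ (Vb * (ν - 1)⁻¹ * R ^ (2 - 2*ν)) ^ ((1:ℝ)/2) :=
      Real.rpow_le_rpow hXhnn (highWeight hν hR) (by norm_num)
    have s2 : ((∫ ξ in (closedBall (0:E2) R)ᶜ, (1 + ‖ξ‖ ^ 2) ^ ν * ‖gS ξ‖ ^ 2)) ^ ((1:ℝ)/2)
        ≤ ((∫ ξ : E2, (1 + ‖ξ‖ ^ 2) ^ ν * ‖gS ξ‖ ^ 2)) ^ ((1:ℝ)/2) :=
      Real.rpow_le_rpow hXh2nn hhigh2 (by norm_num)
    have comb := mul_le_mul s1 s2 (Real.rpow_nonneg hXh2nn _)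
      (Real.rpow_nonneg (mul_nonneg (mul_nonneg Vb_nonneg (inv_nonneg.2 hν1))
        (Real.rpow_nonneg hR0.le _)) _)
    refine le_trans hhighCS (le_trans comb (le_of_eq ?_))
    have expand : (Vb * (ν - 1)⁻¹ * R ^ (2 - 2*ν)) ^ ((1:ℝ)/2)
        = Vb ^ ((1:ℝ)/2) * ((ν - 1) ^ (-(1:ℝ)/2) * R ^ (1 - ν)) := by
      rw [Real.mul_rpow (mul_nonneg Vb_nonneg (inv_nonneg.2 hν1))
          (Real.rpow_nonneg hR0.le _),
        Real.mul_rpow Vb_nonneg (inv_nonneg.2 hν1),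
        Real.inv_rpow hν1, ← Real.rpow_neg hν1,
        ← Real.rpow_mul hR0.le]
      rw [show (2 - 2*ν) * ((1:ℝ)/2) = 1 - ν by ring,
        show -((1:ℝ)/2) = -(1:ℝ)/2 by ring]
      ring
    rw [expand]
    ring
  ---- final combination
  rw [hsob1, hsobν]
  have hXnn : 0 ≤ R ^ ((1:ℝ)/2)
      * ((∫ ξ : E2, (1 + ‖ξ‖ ^ 2) ^ (1:ℝ) * ‖gS ξ‖ ^ 2) ^ ((1:ℝ)/2)) ^ ((1:ℝ)/2)
      * ((∫ x : E2, ‖f x‖ ^ 2) ^ ((1:ℝ)/2)) ^ ((1:ℝ)/2) :=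
    mul_nonneg (mul_nonneg (Real.rpow_nonneg hR0.le _)
      (Real.rpow_nonneg (Real.rpow_nonneg hA1nn _) _))
      (Real.rpow_nonneg (Real.rpow_nonneg hBnn _) _)
  have hYnn : 0 ≤ (ν - 1) ^ (-(1:ℝ)/2) * R ^ (1 - ν)
      * (∫ ξ : E2, (1 + ‖ξ‖ ^ 2) ^ ν * ‖gS ξ‖ ^ 2) ^ ((1:ℝ)/2) :=
    mul_nonneg (mul_nonneg (Real.rpow_nonneg (by linarith) _)
      (Real.rpow_nonneg hR0.le _)) (Real.rpow_nonneg hAνnn _)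
  have key : ‖f y‖ ≤ (2 * Vb) ^ ((1:ℝ)/2) * (R ^ ((1:ℝ)/2)
      * ((∫ ξ : E2, (1 + ‖ξ‖ ^ 2) ^ (1:ℝ) * ‖gS ξ‖ ^ 2) ^ ((1:ℝ)/2)) ^ ((1:ℝ)/2)
      * ((∫ x : E2, ‖f x‖ ^ 2) ^ ((1:ℝ)/2)) ^ ((1:ℝ)/2))
      + Vb ^ ((1:ℝ)/2) * ((ν - 1) ^ (-(1:ℝ)/2) * R ^ (1 - ν)
      * (∫ ξ : E2, (1 + ‖ξ‖ ^ 2) ^ ν * ‖gS ξ‖ ^ 2) ^ ((1:ℝ)/2)) := by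
    calc ‖f y‖ ≤ ∫ ξ : E2, ‖gS ξ‖ := hstart
      _ = _ + _ := hsplit
      _ ≤ _ := add_le_add hlow hhigh
  refine le_trans key ?_
  nlinarith [mul_nonneg ha0 hYnn, mul_nonneg hb0 hXnn, mul_nonneg ha0 hXnn,
    mul_nonneg hb0 hYnn, hXnn, hYnn]

end BG

/-- Brezis–Gallouët-type endpoint estimate with free frequency-splitting
parameter `R`: `‖f‖_∞ ≤ C (R^{1/2} ‖f‖_{H¹}^{1/2} ‖f‖_{L²}^{1/2}
+ (ν-1)^{-1/2} R^{1-ν} ‖f‖_{H^ν})`. -/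
theorem brezis_gallouet_endpoint :
    ∃ C : ℝ, 0 < C ∧ ∀ (ν R : ℝ), 1 < ν → 1 ≤ R →
      ∀ (f : SchwartzMap E2 ℂ) (y : E2),
        ‖f y‖ ≤ C * (R ^ ((1:ℝ) / 2) * (sobNorm 1 ⇑f) ^ ((1:ℝ) / 2) *
            ((∫ x : E2, ‖f x‖ ^ 2) ^ ((1:ℝ) / 2)) ^ ((1:ℝ) / 2)
          + (ν - 1) ^ (-(1:ℝ) / 2) * R ^ (1 - ν) * sobNorm ν ⇑f) :=
  BG.main
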